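/- There exists R ∈ (0,1) such that for every α ∈ ℂ with R < |α| ≤ 1, both |β1(α)| < 1 and |β1(α)²/(α·ρ2)| < 1 hold, where Δ(α) = 1 − 4·(μ2/α + μ1)·(λ1 + λ2·α) and β1(α) = (1 − √(Δ(α))) / (2·(μ2/α + μ1)), with √ denoting the complex square root with nonnegative real part. -/

import Mathlib

noncomputable section

/-- `Δ(α) = 1 − 4·(μ2/α + μ1)·(λ1 + λ2·α)`. -/
def Dscr (l1 m1 l2 m2 : ℝ) (α : ℂ) : ℂ :=
  1 - 4 * ((m2 : ℂ) / α + (m1 : ℂ)) * ((l1 : ℂ) + (l2 : ℂ) * α)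

/-- `β₁(α) = (1 − √Δ(α)) / (2·(μ2/α + μ1))`, where `√` is the square root
with nonnegative real part (the principal complex power `z ^ (1/2)`). -/
def beta1 (l1 m1 l2 m2 : ℝ) (α : ℂ) : ℂ :=
  (1 - Dscr l1 m1 l2 m2 α ^ (1 / 2 : ℂ)) / (2 * ((m2 : ℂ) / α + (m1 : ℂ)))

open Complex Filter Topology

/-- The principal square root has nonnegative real part. -/
lemma re_cpow_half_nonneg (z : ℂ) : 0 ≤ (z ^ (1/2 : ℂ)).re := by
  rcases eq_or_ne z 0 with h | h
  · simp [h, Complex.zero_cpow (by norm_num : (1/2 : ℂ) ≠ 0)]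
  · rw [Complex.cpow_def_of_ne_zero h, Complex.exp_re]
    apply mul_nonneg (Real.exp_nonneg _)
    apply Real.cos_nonneg_of_mem_Icc
    have him : (Complex.log z * (1/2 : ℂ)).im = z.arg / 2 := by
      simp [Complex.mul_im, Complex.log_im]
      ring
    rw [him]
    constructor
    · have := Complex.neg_pi_lt_arg z; linarith
    · have := Complex.arg_le_pi z; linarith

/-- Key bound: the "small branch" `(1 - √(1-4ab))/(2a)` has modulus at most the
small root of the real quadratic `mu·s² - s + lam = 0`, whenever `|a| ≤ mu`,
`|b| ≤ lam` and the real discriminant is nonnegative. -/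
lemma key_bound (a b : ℂ) (mu lam : ℝ) (hmu : 0 < mu) (hlam : 0 ≤ lam)
    (ha : ‖a‖ ≤ mu) (hb : ‖b‖ ≤ lam)
    (hD : 0 ≤ 1 - 4 * mu * lam) :
    ‖(1 - (1 - 4 * a * b) ^ (1/2 : ℂ)) / (2 * a)‖
      ≤ (1 - Real.sqrt (1 - 4 * mu * lam)) / (2 * mu) := by
  set w0 : ℝ := Real.sqrt (1 - 4 * mu * lam) with hw0
  have hw0sq : w0 ^ 2 = 1 - 4 * mu * lam := Real.sq_sqrt hD
  have hw0nn : 0 ≤ w0 := Real.sqrt_nonneg _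
  have hw0le : w0 ≤ 1 := by nlinarith
  set s : ℝ := (1 - w0) / (2 * mu) with hs
  have hsnn : 0 ≤ s := div_nonneg (by linarith) (by linarith)
  have hkey : s * (1 + w0) = 2 * lam := by
    rw [hs]; field_simp; nlinarith
  rcases eq_or_ne a 0 with rfl | ha0
  · simpa using hsnn
  set Δ : ℂ := 1 - 4 * a * b with hΔ
  set w : ℂ := Δ ^ (1/2 : ℂ) with hw
  have hwsq : w ^ 2 = Δ := by
    rw [hw]
    have h2 : (1/2 : ℂ) = ((2:ℕ):ℂ)⁻¹ := by norm_num
    rw [h2]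
    exact Complex.cpow_nat_inv_pow Δ (by norm_num)
  have hwre : 0 ≤ w.re := re_cpow_half_nonneg Δ
  have habs : ‖a * b‖ ≤ mu * lam := by
    rw [norm_mul]
    exact mul_le_mul ha hb (norm_nonneg b) hmu.le
  have hreab : (a * b).re ≤ mu * lam :=
    le_trans (Complex.re_le_norm _) habs
  have hΔre : Δ.re = 1 - 4 * (a * b).re := by
    have h4 : (4 : ℂ) * a * b = ((4:ℝ) : ℂ) * (a * b) := by push_cast; ring
    rw [hΔ, Complex.sub_re, Complex.one_re, h4, Complex.re_ofReal_mul]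
  have hreΔ : w0 ^ 2 ≤ Δ.re := by rw [hΔre]; nlinarith
  have hrew2 : Δ.re = w.re ^ 2 - w.im ^ 2 := by
    rw [← hwsq, sq, Complex.mul_re]; ring
  have hrew : w0 ≤ w.re := by
    nlinarith [sq_nonneg w.im]
  have h1w : (1 : ℝ) + w0 ≤ ‖1 + w‖ := by
    have : (1 + w).re ≤ ‖1 + w‖ := Complex.re_le_norm _
    simp only [Complex.add_re, Complex.one_re] at this
    linarith
  have h1wpos : (0:ℝ) < ‖1 + w‖ := lt_of_lt_of_le (by linarith) h1w
  have h1wne : (1 : ℂ) + w ≠ 0 := by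
    intro h; rw [h] at h1wpos; simp at h1wpos
  have hrw : (1 - w) / (2 * a) = 2 * b / (1 + w) := by
    rw [div_eq_div_iff (by simpa using ha0) h1wne]
    have h12 : (1 - w) * (1 + w) = 1 - w ^ 2 := by ring
    rw [h12, hwsq, hΔ]; ring
  rw [hrw, norm_div, norm_mul]
  rw [div_le_iff₀ h1wpos]
  have hstep : ‖(2:ℂ)‖ * ‖b‖ ≤ s * (1 + w0) := by
    rw [hkey]
    simp only [Complex.norm_two]
    linarith
  calc ‖(2:ℂ)‖ * ‖b‖ ≤ s * (1 + w0) := hstep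
    _ ≤ s * ‖1 + w‖ := by
        apply mul_le_mul_of_nonneg_left h1w hsnn

theorem stmt19 (l1 m1 l2 m2 : ℝ)
    (hl1 : 0 < l1) (hm1 : 0 < m1) (hl2 : 0 < l2) (hm2 : 0 < m2)
    (hsum : l1 + l2 + m1 + m2 = 1)
    (hρ1 : l1 / m1 < 1) (hρ2 : l2 / m2 < 1)
    (hord1 : l2 / m2 ≤ (l1 + l2) / (m1 + m2))
    (hord2 : (l1 + l2) / (m1 + m2) ≤ l1 / m1)
    (hneq : l1 / m1 ≠ l2 / m2)
    (hr2 : ((l1 + l2) / (m1 + m2)) ^ 2 < l2 / m2) :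
    ∃ R : ℝ, 0 < R ∧ R < 1 ∧ ∀ α : ℂ, R < ‖α‖ → ‖α‖ ≤ 1 →
      ‖beta1 l1 m1 l2 m2 α‖ < 1 ∧
      ‖beta1 l1 m1 l2 m2 α ^ 2 / (α * ((l2 / m2 : ℝ) : ℂ))‖ < 1 := by
  set lam : ℝ := l1 + l2 with hlam
  set mu : ℝ := m1 + m2 with hmu
  have hlamp : 0 < lam := by positivity
  have hmup : 0 < mu := by positivity
  have hρ2p : 0 < l2 / m2 := by positivity
  have hlm : lam < mu := by
    have := lt_of_le_of_lt hord2 hρ1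
    rwa [div_lt_one hmup] at this
  have hone : lam + mu = 1 := by rw [hlam, hmu]; linarith
  set F : ℝ → ℝ := fun R => (1 - Real.sqrt (1 - 4 * (m2 / R + m1) * lam)) / (2 * (m2 / R + m1))
    with hF
  have hFc : ContinuousAt F 1 := by
    have hmuR : ContinuousAt (fun R : ℝ => m2 / R + m1) 1 :=
      ((continuousAt_const.div continuousAt_id one_ne_zero).add continuousAt_const)
    have hin : ContinuousAt (fun R : ℝ => 1 - 4 * (m2 / R + m1) * lam) 1 :=
      continuousAt_const.sub ((continuousAt_const.mul hmuR).mul continuousAt_const)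
    exact (continuousAt_const.sub
      (Real.continuous_sqrt.continuousAt.comp hin)).div
      (continuousAt_const.mul hmuR) (by positivity)
  have hd1 : (1:ℝ) - 4 * (m2 / 1 + m1) * lam = (mu - lam)^2 := by
    rw [div_one, hmu]; nlinarith
  have hF1 : F 1 = lam / mu := by
    rw [hF]
    simp only
    rw [hd1, Real.sqrt_sq (by linarith)]
    have h2l : 1 - (mu - lam) = 2 * lam := by linarith
    have hmm : m2 / 1 + m1 = mu := by rw [div_one, hmu]; ring
    rw [hmm, h2l, mul_div_mul_left _ _ (two_ne_zero)]
  have e1 : ∀ᶠ R in 𝓝[<] (1:ℝ), 0 < 1 - 4 * (m2 / R + m1) * lam := by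
    have hin : ContinuousAt (fun R : ℝ => 1 - 4 * (m2 / R + m1) * lam) 1 :=
      continuousAt_const.sub ((continuousAt_const.mul
        ((continuousAt_const.div continuousAt_id one_ne_zero).add continuousAt_const)).mul
        continuousAt_const)
    have hpos : (0:ℝ) < 1 - 4 * (m2 / 1 + m1) * lam := by
      rw [hd1]; exact pow_pos (by linarith) 2
    exact (hin.eventually (eventually_gt_nhds hpos)).filter_mono nhdsWithin_le_nhds
  have e2 : ∀ᶠ R in 𝓝[<] (1:ℝ), F R < 1 := by
    have : F 1 < 1 := by rw [hF1, div_lt_one hmup]; exact hlm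
    exact (hFc.eventually (eventually_lt_nhds this)).filter_mono nhdsWithin_le_nhds
  have e3 : ∀ᶠ R in 𝓝[<] (1:ℝ), (F R)^2 < R * (l2 / m2) := by
    have hc : ContinuousAt (fun R : ℝ => R * (l2/m2) - (F R)^2) 1 :=
      (continuousAt_id.mul continuousAt_const).sub (hFc.pow 2)
    have hpos : (0:ℝ) < 1 * (l2/m2) - (F 1)^2 := by
      rw [hF1, one_mul]
      have hrr : lam / mu = (l1 + l2)/(m1+m2) := by rw [hlam, hmu]
      rw [hrr]; linarith
    have := (hc.eventually (eventually_gt_nhds hpos)).filter_mono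
      (nhdsWithin_le_nhds (s := Set.Iio (1:ℝ)))
    filter_upwards [this] with R hR
    linarith
  have e4 : ∀ᶠ R in 𝓝[<] (1:ℝ), (1/2:ℝ) < R :=
    (eventually_gt_nhds (by norm_num)).filter_mono nhdsWithin_le_nhds
  have e5 : ∀ᶠ R in 𝓝[<] (1:ℝ), R < 1 := eventually_mem_nhdsWithin
  obtain ⟨R, ⟨⟨⟨h1, h2⟩, h3⟩, h4⟩, h5⟩ := ((((e1.and e2).and e3).and e4).and e5).exists
  have hRpos : (0:ℝ) < R := by linarith
  refine ⟨R, hRpos, h5, ?_⟩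
  intro α hα1 hα2
  have hαpos : (0:ℝ) < ‖α‖ := lt_trans hRpos hα1
  -- bounds on a and b
  set a : ℂ := (m2 : ℂ) / α + (m1 : ℂ) with haa
  set b : ℂ := (l1 : ℂ) + (l2 : ℂ) * α with hbb
  have hmuR : 0 < m2 / R + m1 := by positivity
  have hA : ‖a‖ ≤ m2 / R + m1 := by
    refine le_trans (norm_add_le _ _) ?_
    rw [norm_div, Complex.norm_real, Real.norm_eq_abs, Complex.norm_real, Real.norm_eq_abs,
      abs_of_pos hm2, abs_of_pos hm1]
    have : m2 / ‖α‖ ≤ m2 / R :=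
      div_le_div_of_nonneg_left hm2.le hRpos hα1.le
    linarith
  have hB : ‖b‖ ≤ lam := by
    refine le_trans (norm_add_le _ _) ?_
    rw [norm_mul, Complex.norm_real, Real.norm_eq_abs, Complex.norm_real, Real.norm_eq_abs,
      abs_of_pos hl1, abs_of_pos hl2]
    have : l2 * ‖α‖ ≤ l2 * 1 := by
      exact mul_le_mul_of_nonneg_left hα2 hl2.le
    rw [hlam]; linarith
  have hbound : ‖beta1 l1 m1 l2 m2 α‖ ≤ F R := by
    have := key_bound a b (m2 / R + m1) lam hmuR hlamp.le hA hB (le_of_lt h1)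
    simpa [beta1, Dscr, haa, hbb, hF] using this
  have hFRnn : 0 ≤ F R := le_trans (norm_nonneg _) hbound
  constructor
  · exact lt_of_le_of_lt hbound h2
  · rw [norm_div, norm_pow, norm_mul, Complex.norm_real, Real.norm_eq_abs, abs_of_pos hρ2p]
    rw [div_lt_one (by positivity)]
    calc ‖beta1 l1 m1 l2 m2 α‖ ^ 2 ≤ (F R)^2 := by
          apply pow_le_pow_left₀ (norm_nonneg _) hbound
      _ < R * (l2 / m2) := h3
      _ ≤ ‖α‖ * (l2 / m2) := by
          apply mul_le_mul_of_nonneg_right hα1.le hρ2p.le
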